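/- Let X be a topological space and let f_t, t ∈ [0,1], be a continuous loop of homeomorphisms of X based at the identity (f_0 = f_1 = id). Then for every x ∈ X, the loop t ↦ f_t(x) represents an element of the center of the fundamental group π₁(X, x). -/

import Mathlib

open unitInterval CategoryTheory

attribute [local instance] Path.Homotopic.setoid

noncomputable def idPathI : Path (0 : unitInterval) 1 := ⟨⟨id, continuous_id⟩, rfl, rfl⟩

@[simp] theorem idPathI_apply (t : unitInterval) : idPathI t = t := rfl

instance : ContractibleSpace (unitInterval × unitInterval) := by
  have hconv : Convex ℝ ((Set.Icc (0:ℝ) 1) ×ˢ (Set.Icc (0:ℝ) 1)) :=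
    (convex_Icc 0 1).prod (convex_Icc 0 1)
  haveI h := hconv.contractibleSpace ⟨(0,0), by norm_num⟩
  exact (Homeomorph.Set.prod (Set.Icc (0:ℝ) 1) (Set.Icc (0:ℝ) 1)).symm.contractibleSpace

theorem homotopic_cast {X : Type*} [TopologicalSpace X] {xa ya x' y' : X}
    {p q : Path xa ya} (h : p.Homotopic q) (hx : x' = xa) (hy : y' = ya) :
    (p.cast hx hy).Homotopic (q.cast hx hy) := by
  subst hx; subst hy
  exact h

theorem key {X : Type*} [TopologicalSpace X]
    (F : unitInterval → X → X)
    (hcont : Continuous fun p : X × unitInterval => F p.2 p.1)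
    (h0 : ∀ x : X, F 0 x = x) (h1 : ∀ x : X, F 1 x = x)
    (x : X) (γ : Path x x) (hγ : ∀ t : unitInterval, γ t = F t x)
    (δ : Path x x) : (δ.trans γ).Homotopic (γ.trans δ) := by
  have hΦ : Continuous (fun p : unitInterval × unitInterval => F p.2 (δ p.1)) :=
    hcont.comp ((δ.continuous.comp continuous_fst).prodMk continuous_snd)
  let a : Path ((0,0) : unitInterval × unitInterval) (1,1) :=
    (idPathI.prod (Path.refl 0)).trans ((Path.refl 1).prod idPathI)
  let b : Path ((0,0) : unitInterval × unitInterval) (1,1) :=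
    ((Path.refl 0).prod idPathI).trans (idPathI.prod (Path.refl 1))
  have hab : a.Homotopic b := SimplyConnectedSpace.paths_homotopic a b
  have h2 := hab.map ⟨_, hΦ⟩
  have hx0 : x = F (0:unitInterval) (δ 0) := by simp [h0]
  have hx1 : x = F (1:unitInterval) (δ 1) := by simp [h1]
  have h3 := homotopic_cast h2 hx0 hx1
  have ha : (a.map hΦ).cast hx0 hx1 = δ.trans γ := by
    ext t
    simp only [a, Path.cast_coe, Path.map_coe, Function.comp_apply, Path.trans_apply]
    split <;>
    · rw [Path.prod_coe]
      simp [h0, ← hγ]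
  have hb : (b.map hΦ).cast hx0 hx1 = γ.trans δ := by
    ext t
    simp only [b, Path.cast_coe, Path.map_coe, Function.comp_apply, Path.trans_apply]
    split <;>
    · rw [Path.prod_coe]
      simp [h1, ← hγ]
  rwa [ha, hb] at h3


/-- If `F : X × [0,1] → X` is a continuous loop of homeomorphisms based at
the identity (`F 0 = F 1 = id`, each `F t` a homeomorphism), then for every `x : X` the
loop `t ↦ F t x` represents an element of the center of `π₁(X, x)`. -/
theorem loop_of_homeos_gives_central_element {X : Type*} [TopologicalSpace X]
    (F : unitInterval → X → X)
    (hcont : Continuous fun p : X × unitInterval => F p.2 p.1)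
    (hhomeo : ∀ t : unitInterval, IsHomeomorph (F t))
    (h0 : ∀ x : X, F 0 x = x) (h1 : ∀ x : X, F 1 x = x)
    (x : X) (γ : Path x x) (hγ : ∀ t : unitInterval, γ t = F t x) :
    @FundamentalGroup.fromPath (TopCat.of X) _ x ⟦γ⟧ ∈
      Subgroup.center (FundamentalGroup X x) := by
  apply Subgroup.mem_center_iff.mpr
  intro g
  show (FundamentalGroup.fromPath (X := TopCat.of X) (x := x) ⟦γ⟧) ≫ g
      = g ≫ (FundamentalGroup.fromPath (X := TopCat.of X) (x := x) ⟦γ⟧)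
  have : ∃ δ : Path x x, g = ⟦δ⟧ := by
    exact Quotient.exists_rep g |>.imp fun δ h => h.symm
  obtain ⟨δ, hδ⟩ := this
  rw [hδ]
  show Path.Homotopic.Quotient.trans (Path.Homotopic.Quotient.mk γ) (Path.Homotopic.Quotient.mk δ)
    = Path.Homotopic.Quotient.trans (Path.Homotopic.Quotient.mk δ) (Path.Homotopic.Quotient.mk γ)
  rw [← Path.Homotopic.Quotient.mk_trans, ← Path.Homotopic.Quotient.mk_trans]
  exact Quotient.sound (key F hcont h0 h1 x γ hγ δ).symm
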